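/- If Δ is a (d−1)-dimensional flag pseudomanifold, then f_{i-1}(Δ) ≥ 2^i · C(d, i) for all 0 ≤ i ≤ d, with equality for some i with 1 ≤ i ≤ d if and only if Δ is the boundary complex of the d-cross-polytope (the octahedral (d−1)-sphere). -/

import Mathlib

open Finset

variable {V : Type*}

/-- A simplicial complex: a collection of finite subsets containing the empty face
and closed under taking subsets. -/
def IsComplex (K : Set (Finset V)) : Prop :=
  ∅ ∈ K ∧ ∀ s ∈ K, ∀ t ⊆ s, t ∈ K

/-- A complex is flag if every minimal non-face has cardinality two. -/
def IsFlag (K : Set (Finset V)) : Prop :=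
  ∀ s : Finset V, s ∉ K → (∀ t ⊂ s, t ∈ K) → s.card = 2

/-- The induced subcomplex on a set `W` of vertices. -/
def induced (K : Set (Finset V)) (W : Set V) : Set (Finset V) :=
  {s ∈ K | (s : Set V) ⊆ W}

/-- The link of a face `σ`. -/
def link [DecidableEq V] (σ : Finset V) (K : Set (Finset V)) : Set (Finset V) :=
  {τ | τ ∩ σ = ∅ ∧ τ ∪ σ ∈ K}

/-- The vertex set of a complex. -/
def verts (K : Set (Finset V)) : Set V := {v | {v} ∈ K}

/-- `fnum K i` is the number of faces with exactly `i` vertices, i.e. `f_{i-1}`. -/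
noncomputable def fnum (K : Set (Finset V)) (i : ℕ) : ℕ := {s ∈ K | s.card = i}.ncard

/-- `dimIs K d` says the complex is `(d-1)`-dimensional (maximal face cardinality `d`). -/
def dimIs (K : Set (Finset V)) (d : ℕ) : Prop :=
  (∀ s ∈ K, s.card ≤ d) ∧ ∃ s ∈ K, s.card = d

/-- The graph (1-skeleton) of a complex. -/
def graphOf [DecidableEq V] (K : Set (Finset V)) : SimpleGraph V where
  Adj u v := u ≠ v ∧ ({u, v} : Finset V) ∈ K
  symm := by
    refine ⟨?_⟩
    intro u v h
    exact ⟨h.1.symm, by rw [Finset.pair_comm]; exact h.2⟩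
  loopless := ⟨fun v h => h.1 rfl⟩

/-- Connectivity of a complex: its graph, induced on its vertex set, is connected. -/
def ComplexConnected [DecidableEq V] (K : Set (Finset V)) : Prop :=
  ((graphOf K).induce (verts K)).Connected

/-- A `(d-1)`-pseudomanifold: a pure `(d-1)`-dimensional complex in which every
`(d-2)`-face lies in exactly two facets. -/
def IsPseudomanifold [DecidableEq V] (K : Set (Finset V)) (d : ℕ) : Prop :=
  IsComplex K ∧ (∀ s ∈ K, s.card ≤ d) ∧ (∀ s ∈ K, ∃ F ∈ K, s ⊆ F ∧ F.card = d) ∧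
    ∀ r ∈ K, r.card = d - 1 → {F ∈ K | r ⊆ F ∧ F.card = d}.ncard = 2

/-- A normal `(d-1)`-pseudomanifold: connected, and links of faces of dimension
`≤ d-3` are connected. -/
def IsNormalPseudomanifold [DecidableEq V] (K : Set (Finset V)) (d : ℕ) : Prop :=
  IsPseudomanifold K d ∧ ComplexConnected K ∧
    ∀ σ ∈ K, σ.card ≤ d - 2 → ComplexConnected (link σ K)

/-- The boundary complex of the `d`-cross-polytope (the octahedral `(d-1)`-sphere). -/
def octahedron (d : ℕ) : Set (Finset (Fin d × Bool)) :=
  {s | ∀ j : Fin d, ¬(((j, true) ∈ s) ∧ ((j, false) ∈ s))}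

/-- `K` is combinatorially isomorphic to the octahedral `(d-1)`-sphere. -/
def IsOctahedral [DecidableEq V] (K : Set (Finset V)) (d : ℕ) : Prop :=
  ∃ φ : V → Fin d × Bool, Set.InjOn φ (verts K) ∧
    (fun s : Finset V => s.image φ) '' K = octahedron d

namespace Flag8
variable {V : Type*} [DecidableEq V] {K : Set (Finset V)} {d : ℕ}

/-- "Cliques are faces" property. -/
def ClP (K : Set (Finset V)) : Prop :=
  ∀ s : Finset V, (∀ u ∈ s, ({u} : Finset V) ∈ K) →
    (∀ u ∈ s, ∀ w ∈ s, u ≠ w → ({u, w} : Finset V) ∈ K) → s ∈ K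

lemma vert_mem (hC : IsComplex K) {s : Finset V} (hs : s ∈ K) {u : V} (hu : u ∈ s) :
    ({u} : Finset V) ∈ K :=
  hC.2 s hs {u} (Finset.singleton_subset_iff.2 hu)


lemma pair_mem (hC : IsComplex K) {s : Finset V} (hs : s ∈ K) {u x : V}
    (hu : u ∈ s) (hx : x ∈ s) : ({u, x} : Finset V) ∈ K := by
  apply hC.2 s hs
  intro y hy
  rcases Finset.mem_insert.1 hy with rfl | hy
  · exact hu
  · rw [Finset.mem_singleton.1 hy]; exact hx

lemma flag_clp (hC : IsComplex K) (hF : IsFlag K) : ClP K := by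
  intro s
  induction s using Finset.strongInduction with
  | _ s ih =>
    intro h1 h2
    by_contra hs
    have hsub : ∀ t ⊂ s, t ∈ K := by
      intro t ht
      exact ih t ht (fun u hu => h1 u (ht.1 hu)) (fun u hu w hw => h2 u (ht.1 hu) w (ht.1 hw))
    have hcard := hF s hs hsub
    obtain ⟨u, w, huw, rfl⟩ := Finset.card_eq_two.1 hcard
    exact hs (h2 u (by simp) w (by simp) huw)

lemma d_pos (hP : IsPseudomanifold K d) : 0 < d := by
  rcases Nat.eq_zero_or_pos d with h | h
  · exfalso
    subst h
    have h2 := hP.2.2.2 ∅ hP.1.1 rfl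
    have : {F ∈ K | ∅ ⊆ F ∧ F.card = 0} = {∅} := by
      ext F
      simp only [Set.mem_setOf_eq, Set.mem_singleton_iff, Finset.card_eq_zero]
      constructor
      · rintro ⟨_, _, h⟩; exact h
      · rintro rfl; exact ⟨hP.1.1, subset_rfl, rfl⟩
    rw [this, Set.ncard_singleton] at h2
    omega
  · exact h

/-- The "opposite vertex" lemma. -/
lemma opp_lemma (hP : IsPseudomanifold K d) (hcl : ClP K) {F : Finset V} (hF : F ∈ K)
    (hFc : F.card = d) {v : V} (hv : v ∈ F) :
    ∃ w, w ∉ F ∧ ({v, w} : Finset V) ∉ K ∧ (F \ {v}) ∪ {w} ∈ K ∧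
      ((F \ {v}) ∪ {w}).card = d := by
  classical
  set r : Finset V := F \ {v} with hr
  have hrK : r ∈ K := hP.1.2 F hF r (Finset.sdiff_subset)
  have hrc : r.card = d - 1 := by
    rw [hr, Finset.card_sdiff_of_subset (Finset.singleton_subset_iff.2 hv), hFc, Finset.card_singleton]
  have h2 := hP.2.2.2 r hrK hrc
  obtain ⟨A, B, hAB, hset⟩ := Set.ncard_eq_two.1 h2
  have hFm : F ∈ {G ∈ K | r ⊆ G ∧ G.card = d} := ⟨hF, Finset.sdiff_subset, hFc⟩
  rw [hset] at hFm
  -- G is the other facet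
  obtain ⟨G, hGm, hGF⟩ : ∃ G, G ∈ {G ∈ K | r ⊆ G ∧ G.card = d} ∧ G ≠ F := by
    rcases hFm with rfl | rfl
    · exact ⟨B, by rw [hset]; simp, hAB.symm⟩
    · exact ⟨A, by rw [hset]; simp, hAB⟩
  obtain ⟨hGK, hrG, hGc⟩ := hGm
  have hdpos : 0 < d := d_pos hP
  have hcdiff : (G \ r).card = 1 := by
    rw [Finset.card_sdiff_of_subset hrG, hGc, hrc]; omega
  obtain ⟨w, hw⟩ := Finset.card_eq_one.1 hcdiff
  have hwG : w ∈ G ∧ w ∉ r := by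
    have : w ∈ G \ r := by rw [hw]; simp
    exact ⟨(Finset.mem_sdiff.1 this).1, (Finset.mem_sdiff.1 this).2⟩
  have hGeq : G = r ∪ {w} := by
    refine ((Finset.eq_of_subset_of_card_le ?_ ?_)).symm
    · intro x hx
      rcases Finset.mem_union.1 hx with hx | hx
      · exact hrG hx
      · rw [Finset.mem_singleton.1 hx]; exact hwG.1
    · have : (r ∪ {w}).card = r.card + 1 := by
        rw [Finset.union_comm]
        rw [show ({w} ∪ r : Finset V) = insert w r by ext x; simp,
          Finset.card_insert_of_notMem hwG.2]
      rw [hGc, this, hrc]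
      omega
  have hwv : w ≠ v := by
    rintro rfl
    apply hGF
    rw [hGeq, hr]
    ext x; simp only [Finset.mem_union, Finset.mem_sdiff, Finset.mem_singleton]
    constructor
    · rintro (⟨h, _⟩ | rfl); exact h; exact hv
    · intro hx; by_cases hxv : x = w
      · right; exact hxv
      · left; exact ⟨hx, hxv⟩
  have hwF : w ∉ F := by
    intro hwF
    apply hwG.2
    rw [hr]; exact Finset.mem_sdiff.2 ⟨hwF, by simpa using hwv⟩
  refine ⟨w, hwF, ?_, by rwa [← hGeq], by rw [← hGeq]; exact hGc⟩
  -- non-adjacency via flagness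
  intro hpair
  have hclique : (F ∪ {w} : Finset V) ∈ K := by
    apply hcl
    · intro u hu
      rcases Finset.mem_union.1 hu with hu | hu
      · exact vert_mem hP.1 hF hu
      · rw [Finset.mem_singleton.1 hu]; exact vert_mem hP.1 hGK hwG.1
    · intro u hu x hx hux
      rcases Finset.mem_union.1 hu with hu | hu <;> rcases Finset.mem_union.1 hx with hx | hx
      · exact pair_mem hP.1 hF hu hx
      · rw [Finset.mem_singleton.1 hx]
        by_cases huv : u = v
        · subst huv; exact hpair
        · exact pair_mem hP.1 hGK (hrG (Finset.mem_sdiff.2 ⟨hu, by simpa using huv⟩)) hwG.1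
      · rw [Finset.mem_singleton.1 hu, Finset.pair_comm]
        by_cases hxv : x = v
        · subst hxv; exact hpair
        · exact pair_mem hP.1 hGK (hrG (Finset.mem_sdiff.2 ⟨hx, by simpa using hxv⟩)) hwG.1
      · exact absurd (by rw [Finset.mem_singleton.1 hu, Finset.mem_singleton.1 hx]) hux
  have hle := hP.2.1 _ hclique
  have hcard2 : (F ∪ {w}).card = d + 1 := by
    rw [Finset.union_comm]
    show ({w} ∪ F).card = d + 1
    rw [show ({w} ∪ F : Finset V) = insert w F by ext x; simp,
      Finset.card_insert_of_notMem hwF, hFc]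
  omega


section Count
variable (K)

noncomputable def faceF (hfin : K.Finite) (i : ℕ) : Finset (Finset V) :=
  hfin.toFinset.filter (fun s => s.card = i)

noncomputable def Vfin (hfin : K.Finite) : Finset V := hfin.toFinset.sup id

end Count

lemma fnum_eq (hfin : K.Finite) (i : ℕ) : fnum K i = (faceF K hfin i).card := by
  rw [fnum, ← Set.ncard_coe_finset]
  congr 1
  ext s
  simp [faceF, Set.Finite.mem_toFinset]

lemma mem_Vfin (hC : IsComplex K) (hfin : K.Finite) {v : V} :
    v ∈ Vfin K hfin ↔ ({v} : Finset V) ∈ K := by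
  rw [Vfin, Finset.mem_sup]
  constructor
  · rintro ⟨s, hs, hv⟩
    exact vert_mem hC (hfin.mem_toFinset.1 hs) hv
  · intro h
    exact ⟨{v}, hfin.mem_toFinset.2 h, by simp⟩

lemma fnum_one (hC : IsComplex K) (hfin : K.Finite) :
    fnum K 1 = (Vfin K hfin).card := by
  rw [fnum_eq hfin]
  have : faceF K hfin 1 = (Vfin K hfin).image (fun v => ({v} : Finset V)) := by
    ext s
    simp only [faceF, Finset.mem_filter, Finset.mem_image, Set.Finite.mem_toFinset,
      Finset.card_eq_one]
    constructor
    · rintro ⟨hs, v, rfl⟩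
      exact ⟨v, (mem_Vfin hC hfin).2 hs, rfl⟩
    · rintro ⟨v, hv, rfl⟩
      exact ⟨(mem_Vfin hC hfin).1 hv, v, rfl⟩
  rw [this, Finset.card_image_of_injective _ Finset.singleton_injective]

lemma mem_link {v : V} {τ : Finset V} :
    τ ∈ link ({v} : Finset V) K ↔ v ∉ τ ∧ insert v τ ∈ K := by
  have h1 : τ ∩ {v} = ∅ ↔ v ∉ τ := by
    constructor
    · intro h hv
      have : v ∈ τ ∩ {v} := Finset.mem_inter.2 ⟨hv, Finset.mem_singleton_self v⟩
      rw [h] at this; exact absurd this (Finset.notMem_empty v)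
    · intro h
      ext x
      simp only [Finset.mem_inter, Finset.mem_singleton, Finset.notMem_empty, iff_false,
        not_and]
      rintro hx rfl; exact h hx
  have h2 : τ ∪ {v} = insert v τ := by ext x; simp [or_comm]
  rw [link]
  simp only [Set.mem_setOf_eq, h1, h2]

lemma link_finite (hfin : K.Finite) (v : V) : (link ({v} : Finset V) K).Finite := by
  apply (hfin.image (fun s => s.erase v)).subset
  rintro τ hτ
  rw [mem_link] at hτ
  exact ⟨insert v τ, hτ.2, by simp [Finset.erase_insert hτ.1]⟩

lemma link_complex (hC : IsComplex K) {v : V} (hv : ({v} : Finset V) ∈ K) :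
    IsComplex (link ({v} : Finset V) K) := by
  constructor
  · rw [mem_link]; simpa using hv
  · intro s hs t hts
    rw [mem_link] at hs ⊢
    refine ⟨fun h => hs.1 (hts h), hC.2 _ hs.2 _ ?_⟩
    exact Finset.insert_subset_insert v hts

lemma link_clp (hC : IsComplex K) (hcl : ClP K) {v : V} (hv : ({v} : Finset V) ∈ K) :
    ClP (link ({v} : Finset V) K) := by
  intro s h1 h2
  have hvs : v ∉ s := by
    intro hvs
    have := (mem_link.1 (h1 v hvs)).1
    simp at this
  rw [mem_link]
  refine ⟨hvs, ?_⟩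
  have key : ∀ x ∈ s, ({v, x} : Finset V) ∈ K := fun x hx => (mem_link.1 (h1 x hx)).2
  apply hcl
  · intro u hu
    rcases Finset.mem_insert.1 hu with rfl | hu
    · exact hv
    · exact hC.2 _ (key u hu) _ (by simp)
  · intro u hu w hw huw
    by_cases hu' : u = v
    · subst hu'
      have hw' : w ∈ s := (Finset.mem_insert.1 hw).resolve_left (fun h => absurd h.symm huw)
      exact key w hw'
    · have hu'' : u ∈ s := (Finset.mem_insert.1 hu).resolve_left hu'
      by_cases hw' : w = v
      · subst hw'
        rw [Finset.pair_comm]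
        exact key u hu''
      · have hw'' : w ∈ s := (Finset.mem_insert.1 hw).resolve_left hw'
        have := (mem_link.1 (h2 u hu'' w hw'' huw)).2
        exact hC.2 _ this _ (Finset.subset_insert v {u, w})

lemma link_pm (hP : IsPseudomanifold K d) {v : V} (hv : ({v} : Finset V) ∈ K)
    (hd : 2 ≤ d) : IsPseudomanifold (link ({v} : Finset V) K) (d - 1) := by
  obtain ⟨hC, hdim, hpure, hridge⟩ := hP
  refine ⟨link_complex hC hv, ?_, ?_, ?_⟩
  · intro s hs
    rw [mem_link] at hs
    have := hdim _ hs.2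
    rw [Finset.card_insert_of_notMem hs.1] at this
    omega
  · intro s hs
    rw [mem_link] at hs
    obtain ⟨F, hFK, hsF, hFc⟩ := hpure _ hs.2
    refine ⟨F.erase v, ?_, ?_, ?_⟩
    · rw [mem_link]
      refine ⟨Finset.notMem_erase v F, ?_⟩
      rwa [Finset.insert_erase (hsF (Finset.mem_insert_self v s))]
    · intro x hx
      exact Finset.mem_erase.2 ⟨fun h => hs.1 (h ▸ hx), hsF (Finset.mem_insert_of_mem hx)⟩
    · rw [Finset.card_erase_of_mem (hsF (Finset.mem_insert_self v s)), hFc]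
  · intro r hr hrc
    rw [mem_link] at hr
    have hrc' : (insert v r).card = d - 1 := by
      rw [Finset.card_insert_of_notMem hr.1, hrc]; omega
    have h2 := hridge _ hr.2 hrc'
    have hinj : Set.InjOn (fun F => F.erase v) {F ∈ K | insert v r ⊆ F ∧ F.card = d} := by
      rintro F1 ⟨_, h1, _⟩ F2 ⟨_, h2', _⟩ he
      have hv1 : v ∈ F1 := h1 (Finset.mem_insert_self _ _)
      have hv2 : v ∈ F2 := h2' (Finset.mem_insert_self _ _)
      rw [← Finset.insert_erase hv1, ← Finset.insert_erase hv2]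
      simp only at he
      rw [he]
    have heq : {G ∈ link ({v} : Finset V) K | r ⊆ G ∧ G.card = d - 1}
        = (fun F => F.erase v) '' {F ∈ K | insert v r ⊆ F ∧ F.card = d} := by
      ext G
      simp only [Set.mem_setOf_eq, Set.mem_image, mem_link]
      constructor
      · rintro ⟨⟨hvG, hins⟩, hrG, hGc⟩
        refine ⟨insert v G, ⟨hins, Finset.insert_subset_insert v hrG, ?_⟩,
          Finset.erase_insert hvG⟩
        rw [Finset.card_insert_of_notMem hvG, hGc]; omega
      · rintro ⟨F, ⟨hFK, hrF, hFc⟩, rfl⟩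
        have hvF : v ∈ F := hrF (Finset.mem_insert_self _ _)
        refine ⟨⟨Finset.notMem_erase _ _, by rwa [Finset.insert_erase hvF]⟩, ?_, ?_⟩
        · intro x hx
          exact Finset.mem_erase.2 ⟨fun h => hr.1 (h ▸ hx), hrF (Finset.mem_insert_of_mem hx)⟩
        · rw [Finset.card_erase_of_mem hvF, hFc]
    rw [heq, Set.ncard_image_of_injOn hinj]
    exact h2

lemma sum_link_fnum (hC : IsComplex K) (hfin : K.Finite) {i : ℕ} (hi : 1 ≤ i) :
    ∑ v ∈ Vfin K hfin, fnum (link ({v} : Finset V) K) (i - 1) = i * fnum K i := by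
  have hterm : ∀ v ∈ Vfin K hfin, fnum (link ({v} : Finset V) K) (i - 1)
      = ((faceF K hfin i).filter (fun s => v ∈ s)).card := by
    intro v _
    rw [fnum, ← Set.ncard_coe_finset ((faceF K hfin i).filter (fun s => v ∈ s))]
    have hinj : Set.InjOn (fun s => s.erase v)
        (((faceF K hfin i).filter (fun s => v ∈ s) : Finset (Finset V)) : Set (Finset V)) := by
      rintro s1 hs1 s2 hs2 he
      simp only [Finset.coe_filter, Set.mem_setOf_eq] at hs1 hs2
      simp only at he
      rw [← Finset.insert_erase hs1.2, ← Finset.insert_erase hs2.2, he]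
    have heq : {τ ∈ link ({v} : Finset V) K | τ.card = i - 1}
        = (fun s => s.erase v) ''
          (((faceF K hfin i).filter (fun s => v ∈ s) : Finset (Finset V)) : Set (Finset V)) := by
      ext τ
      simp only [Set.mem_setOf_eq, Set.mem_image, Finset.coe_filter, faceF,
        Finset.mem_filter, Set.Finite.mem_toFinset, mem_link]
      constructor
      · rintro ⟨⟨hvτ, hins⟩, hcard⟩
        refine ⟨insert v τ, ⟨⟨hins, ?_⟩, Finset.mem_insert_self _ _⟩, Finset.erase_insert hvτ⟩
        rw [Finset.card_insert_of_notMem hvτ, hcard]; omega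
      · rintro ⟨s, ⟨⟨hsK, hsc⟩, hvs⟩, rfl⟩
        refine ⟨⟨Finset.notMem_erase _ _, by rwa [Finset.insert_erase hvs]⟩, ?_⟩
        rw [Finset.card_erase_of_mem hvs, hsc]
    rw [heq, Set.ncard_image_of_injOn hinj]
  rw [Finset.sum_congr rfl hterm, fnum_eq hfin]
  have hsub : ∀ s ∈ faceF K hfin i, (Vfin K hfin).filter (fun v => v ∈ s) = s := by
    intro s hs
    simp only [faceF, Finset.mem_filter, Set.Finite.mem_toFinset] at hs
    ext x
    simp only [Finset.mem_filter, and_iff_right_iff_imp]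
    intro hx
    exact (mem_Vfin hC hfin).2 (vert_mem hC hs.1 hx)
  calc ∑ v ∈ Vfin K hfin, ((faceF K hfin i).filter (fun s => v ∈ s)).card
      = ∑ v ∈ Vfin K hfin, ∑ s ∈ faceF K hfin i, if v ∈ s then 1 else 0 :=
        Finset.sum_congr rfl (fun v _ => Finset.card_filter _ _)
    _ = ∑ s ∈ faceF K hfin i, ∑ v ∈ Vfin K hfin, if v ∈ s then 1 else 0 := Finset.sum_comm
    _ = ∑ s ∈ faceF K hfin i, ((Vfin K hfin).filter (fun v => v ∈ s)).card :=
        Finset.sum_congr rfl (fun s _ => (Finset.card_filter _ _).symm)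
    _ = ∑ s ∈ faceF K hfin i, i := by
        apply Finset.sum_congr rfl
        intro s hs
        rw [hsub s hs]
        simp only [faceF, Finset.mem_filter, Set.Finite.mem_toFinset] at hs
        exact hs.2
    _ = i * (faceF K hfin i).card := by rw [Finset.sum_const, smul_eq_mul, mul_comm]


/-- Within a fixed facet, the "antipode" map is injective and avoids `F`,
giving at least `2d` vertices. -/
lemma verts_lb (hP : IsPseudomanifold K d) (hcl : ClP K) (hfin : K.Finite) :
    2 * d ≤ (Vfin K hfin).card := by
  obtain ⟨F, hFK, -, hFc⟩ := hP.2.2.1 ∅ hP.1.1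
  have hops : ∀ v : {x // x ∈ F}, ∃ w, w ∉ F ∧ ({v.1, w} : Finset V) ∉ K ∧
      (F \ {v.1}) ∪ {w} ∈ K ∧ ((F \ {v.1}) ∪ {w}).card = d :=
    fun v => opp_lemma hP hcl hFK hFc v.2
  choose f hf using hops
  have hadj : ∀ (v : {x // x ∈ F}) (u : V), u ∈ F → u ≠ v.1 → ({u, f v} : Finset V) ∈ K := by
    intro v u hu huv
    apply pair_mem hP.1 (hf v).2.2.1
    · exact Finset.mem_union_left _ (Finset.mem_sdiff.2 ⟨hu, by simpa using huv⟩)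
    · exact Finset.mem_union_right _ (by simp)
  have hinj : Function.Injective f := by
    intro v v' hvv
    by_contra hne
    have hne' : v.1 ≠ v'.1 := fun h => hne (Subtype.ext h)
    have h1 : ({v.1, f v'} : Finset V) ∈ K := hadj v' v.1 v.2 hne'
    rw [← hvv] at h1
    exact (hf v).2.1 h1
  have hsub : F ∪ Finset.univ.image f ⊆ Vfin K hfin := by
    intro x hx
    rcases Finset.mem_union.1 hx with hx | hx
    · exact (mem_Vfin hP.1 hfin).2 (vert_mem hP.1 hFK hx)
    · obtain ⟨v, -, rfl⟩ := Finset.mem_image.1 hx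
      exact (mem_Vfin hP.1 hfin).2 (vert_mem hP.1 (hf v).2.2.1
        (Finset.mem_union_right _ (by simp)))
  have hdisj : Disjoint F (Finset.univ.image f) := by
    rw [Finset.disjoint_right]
    intro x hx
    obtain ⟨v, -, rfl⟩ := Finset.mem_image.1 hx
    exact (hf v).1
  have hcard : (F ∪ Finset.univ.image f).card = 2 * d := by
    rw [Finset.card_union_of_disjoint hdisj, Finset.card_image_of_injective _ hinj,
      Finset.card_univ, Fintype.card_coe, hFc]
    ring
  calc 2 * d = (F ∪ Finset.univ.image f).card := hcard.symm
    _ ≤ (Vfin K hfin).card := Finset.card_le_card hsub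

lemma fnum_zero (hC : IsComplex K) (hfin : K.Finite) : fnum K 0 = 1 := by
  rw [fnum]
  have : {s ∈ K | s.card = 0} = {(∅ : Finset V)} := by
    ext s
    simp only [Set.mem_setOf_eq, Set.mem_singleton_iff, Finset.card_eq_zero]
    exact ⟨fun h => h.2, fun h => ⟨h ▸ hC.1, h⟩⟩
  rw [this, Set.ncard_singleton]

/-- The main lower bound, by induction on `i` using vertex links. -/
lemma main_lb (i : ℕ) : ∀ (K : Set (Finset V)) (d : ℕ), K.Finite → IsPseudomanifold K d →
    ClP K → i ≤ d → 2 ^ i * d.choose i ≤ fnum K i := by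
  induction i with
  | zero =>
    intro K d hfin hP hcl _
    simp [fnum_zero hP.1 hfin]
  | succ i ih =>
    intro K d hfin hP hcl hle
    rcases Nat.eq_zero_or_pos i with rfl | hipos
    · -- i + 1 = 1
      rw [fnum_one hP.1 hfin]
      calc 2 ^ 1 * d.choose 1 = 2 * d := by rw [Nat.choose_one_right]; ring
        _ ≤ (Vfin K hfin).card := verts_lb hP hcl hfin
    · have hd2 : 2 ≤ d := by omega
      have hdpos : 0 < d := by omega
      have hkey : 2 * d * (2 ^ i * (d - 1).choose i) ≤ (i + 1) * fnum K (i + 1) := by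
        rw [← sum_link_fnum hP.1 hfin (by omega : 1 ≤ i + 1)]
        have hterm : ∀ v ∈ Vfin K hfin,
            2 ^ i * (d - 1).choose i ≤ fnum (link ({v} : Finset V) K) (i + 1 - 1) := by
          intro v hv
          have hvK := (mem_Vfin hP.1 hfin).1 hv
          simpa using ih (link ({v} : Finset V) K) (d - 1) (link_finite hfin v)
            (link_pm hP hvK hd2) (link_clp hP.1 hcl hvK) (by omega)
        calc 2 * d * (2 ^ i * (d - 1).choose i)
            ≤ (Vfin K hfin).card * (2 ^ i * (d - 1).choose i) :=
              Nat.mul_le_mul_right _ (verts_lb hP hcl hfin)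
          _ ≤ ∑ v ∈ Vfin K hfin, fnum (link ({v} : Finset V) K) (i + 1 - 1) := by
              simpa using Finset.card_nsmul_le_sum _ _ _ hterm
      have harith : 2 * d * (2 ^ i * (d - 1).choose i)
          = (i + 1) * (2 ^ (i + 1) * d.choose (i + 1)) := by
        have h1 : d * (d - 1).choose i = d.choose (i + 1) * (i + 1) := by
          have := Nat.add_one_mul_choose_eq (d - 1) i
          rw [show d - 1 + 1 = d by omega] at this
          exact this
        calc 2 * d * (2 ^ i * (d - 1).choose i)
            = 2 * 2 ^ i * (d * (d - 1).choose i) := by ring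
          _ = 2 * 2 ^ i * (d.choose (i + 1) * (i + 1)) := by rw [h1]
          _ = (i + 1) * (2 ^ (i + 1) * d.choose (i + 1)) := by ring
      rw [harith] at hkey
      exact Nat.le_of_mul_le_mul_left hkey (by omega)


lemma verts_eq_Vfin (hC : IsComplex K) (hfin : K.Finite) :
    verts K = ↑(Vfin K hfin) := by
  ext v
  rw [Finset.mem_coe, mem_Vfin hC hfin]
  rfl

lemma eq_imp_verts (hP : IsPseudomanifold K d) (hcl : ClP K) (hfin : K.Finite) {i : ℕ}
    (hi1 : 1 ≤ i) (hid : i ≤ d) (heq : fnum K i = 2 ^ i * d.choose i) :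
    (Vfin K hfin).card = 2 * d := by
  refine le_antisymm ?_ (verts_lb hP hcl hfin)
  obtain ⟨j, rfl⟩ : ∃ j, i = j + 1 := ⟨i - 1, by omega⟩
  rcases Nat.eq_zero_or_pos j with rfl | hjpos
  · rw [← fnum_one hP.1 hfin, heq, Nat.choose_one_right]
    ring_nf
    omega
  · have hd2 : 2 ≤ d := by omega
    have hkey : (Vfin K hfin).card * (2 ^ j * (d - 1).choose j) ≤ (j + 1) * fnum K (j + 1) := by
      rw [← sum_link_fnum hP.1 hfin (by omega : 1 ≤ j + 1)]
      have hterm : ∀ v ∈ Vfin K hfin,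
          2 ^ j * (d - 1).choose j ≤ fnum (link ({v} : Finset V) K) (j + 1 - 1) := by
        intro v hv
        have hvK := (mem_Vfin hP.1 hfin).1 hv
        simpa using main_lb j (link ({v} : Finset V) K) (d - 1) (link_finite hfin v)
          (link_pm hP hvK hd2) (link_clp hP.1 hcl hvK) (by omega)
      simpa using Finset.card_nsmul_le_sum _ _ _ hterm
    have harith : (j + 1) * fnum K (j + 1) = 2 * d * (2 ^ j * (d - 1).choose j) := by
      rw [heq]
      have h1 : d * (d - 1).choose j = d.choose (j + 1) * (j + 1) := by
        have := Nat.add_one_mul_choose_eq (d - 1) j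
        rw [show d - 1 + 1 = d by omega] at this
        exact this
      calc (j + 1) * (2 ^ (j + 1) * d.choose (j + 1))
          = 2 * 2 ^ j * (d.choose (j + 1) * (j + 1)) := by ring
        _ = 2 * 2 ^ j * (d * (d - 1).choose j) := by rw [h1]
        _ = 2 * d * (2 ^ j * (d - 1).choose j) := by ring
    rw [harith] at hkey
    have hBpos : 0 < 2 ^ j * (d - 1).choose j :=
      Nat.mul_pos (Nat.pow_pos (by omega)) (Nat.choose_pos (by omega))
    exact Nat.le_of_mul_le_mul_right hkey hBpos

lemma octa_fnum (hP : IsPseudomanifold K d) (hfin : K.Finite) (hoct : IsOctahedral K d) :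
    fnum K 1 = 2 * d := by
  obtain ⟨φ, hinj, himg⟩ := hoct
  rw [fnum_one hP.1 hfin]
  have hvfin : (verts K).Finite := by rw [verts_eq_Vfin hP.1 hfin]; exact (Vfin K hfin).finite_toSet
  have hsurj : φ '' (verts K) = Set.univ := by
    apply Set.eq_univ_of_forall
    intro p
    have hpo : ({p} : Finset (Fin d × Bool)) ∈ octahedron d := by
      intro j ⟨h1, h2⟩
      rw [Finset.mem_singleton] at h1 h2
      rw [← h2] at h1
      simp at h1
    rw [← himg] at hpo
    obtain ⟨s, hsK, hs⟩ := hpo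
    simp only at hs
    have hne : s.Nonempty := by
      by_contra h
      rw [Finset.not_nonempty_iff_eq_empty] at h
      subst h
      rw [Finset.image_empty] at hs
      exact absurd hs.symm (Finset.singleton_ne_empty p)
    obtain ⟨u, hu⟩ := hne
    refine ⟨u, vert_mem hP.1 hsK hu, ?_⟩
    have : φ u ∈ s.image φ := Finset.mem_image_of_mem φ hu
    rw [hs, Finset.mem_singleton] at this
    exact this
  have h1 : (verts K).ncard = (φ '' (verts K)).ncard :=
    (Set.ncard_image_of_injOn hinj).symm
  rw [hsurj, Set.ncard_univ, Nat.card_eq_fintype_card, Fintype.card_prod, Fintype.card_fin,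
    Fintype.card_bool] at h1
  rw [← Set.ncard_coe_finset, ← verts_eq_Vfin hP.1 hfin, h1]
  ring


/-- Reconstruction: a flag pseudomanifold with exactly `2d` vertices is octahedral. -/
lemma octa_of_verts (hP : IsPseudomanifold K d) (hcl : ClP K) (hfin : K.Finite)
    (hvc : (Vfin K hfin).card = 2 * d) : IsOctahedral K d := by
  have hdpos := d_pos hP
  obtain ⟨F, hFK, -, hFc⟩ := hP.2.2.1 ∅ hP.1.1
  have e : {x // x ∈ F} ≃ Fin d := F.equivFin.trans (finCongr hFc)
  set g : Fin d → V := fun j => (e.symm j).1 with hg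
  have hg_mem : ∀ j, g j ∈ F := fun j => (e.symm j).2
  have hg_inj : Function.Injective g := by
    intro a b h
    exact e.symm.injective (Subtype.ext h)
  have hops : ∀ j : Fin d, ∃ w, w ∉ F ∧ ({g j, w} : Finset V) ∉ K ∧
      (F \ {g j}) ∪ {w} ∈ K ∧ ((F \ {g j}) ∪ {w}).card = d :=
    fun j => opp_lemma hP hcl hFK hFc (hg_mem j)
  choose f hf using hops
  have hfact2 : ∀ j k : Fin d, ({g j, g k} : Finset V) ∈ K :=
    fun j k => pair_mem hP.1 hFK (hg_mem j) (hg_mem k)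
  have hfact3 : ∀ j k : Fin d, j ≠ k → ({g j, f k} : Finset V) ∈ K := by
    intro j k hjk
    apply pair_mem hP.1 (hf k).2.2.1
    · exact Finset.mem_union_left _
        (Finset.mem_sdiff.2 ⟨hg_mem j, by simpa using fun h => hjk (hg_inj h)⟩)
    · exact Finset.mem_union_right _ (Finset.mem_singleton_self _)
  have hgf_ne : ∀ j k, g j ≠ f k := by
    intro j k h
    exact (hf k).1 (h ▸ hg_mem j)
  have hf_inj : Function.Injective f := by
    intro j k h
    by_contra hne
    have h1 : ({g j, f k} : Finset V) ∈ K := hfact3 j k hne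
    rw [← h] at h1
    exact (hf j).2.1 h1
  set ψ : Fin d × Bool → V := fun x => if x.2 = true then g x.1 else f x.1 with hψ
  have hψt : ∀ j, ψ (j, true) = g j := fun j => rfl
  have hψf : ∀ j, ψ (j, false) = f j := fun j => rfl
  have hψ_inj : Function.Injective ψ := by
    rintro ⟨j, bj⟩ ⟨k, bk⟩ h
    cases bj <;> cases bk <;> simp only [hψt, hψf] at h
    · rw [hf_inj h]
    · exact absurd h.symm (hgf_ne k j)
    · exact absurd h (hgf_ne j k)
    · rw [hg_inj h]
  have hψ_vert : ∀ x, ψ x ∈ Vfin K hfin := by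
    rintro ⟨j, b⟩
    cases b
    · rw [hψf]
      exact (mem_Vfin hP.1 hfin).2 (vert_mem hP.1 (hf j).2.2.1
        (Finset.mem_union_right _ (Finset.mem_singleton_self _)))
    · rw [hψt]
      exact (mem_Vfin hP.1 hfin).2 (vert_mem hP.1 hFK (hg_mem j))
  have himage : Finset.univ.image ψ = Vfin K hfin := by
    apply Finset.eq_of_subset_of_card_le
    · intro x hx
      obtain ⟨y, -, rfl⟩ := Finset.mem_image.1 hx
      exact hψ_vert y
    · rw [Finset.card_image_of_injective _ hψ_inj, Finset.card_univ, Fintype.card_prod,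
        Fintype.card_fin, Fintype.card_bool, hvc]
      omega
  have hrep : ∀ v ∈ Vfin K hfin, ∃ x, ψ x = v := by
    intro v hv
    rw [← himage] at hv
    obtain ⟨x, -, hx⟩ := Finset.mem_image.1 hv
    exact ⟨x, hx⟩
  have hfact4 : ∀ j k : Fin d, j ≠ k → ({f j, f k} : Finset V) ∈ K := by
    intro j k hjk
    have hgkFj : g k ∈ (F \ {g j}) ∪ {f j} :=
      Finset.mem_union_left _
        (Finset.mem_sdiff.2 ⟨hg_mem k, by simpa using fun h => hjk (hg_inj h).symm⟩)
    obtain ⟨w, hwFj, hwpair, hGK, hGc⟩ := opp_lemma hP hcl (hf j).2.2.1 (hf j).2.2.2 hgkFj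
    have hwV : w ∈ Vfin K hfin :=
      (mem_Vfin hP.1 hfin).2 (vert_mem hP.1 hGK
        (Finset.mem_union_right _ (Finset.mem_singleton_self _)))
    obtain ⟨⟨m, b⟩, hw⟩ := hrep w hwV
    have hwk : w = f k := by
      cases b
      · -- w = f m
        rw [hψf] at hw
        by_cases hmk : m = k
        · rw [← hw, hmk]
        · exact absurd (hw ▸ hfact3 k m (fun h => hmk h.symm)) hwpair
      · -- w = g m, impossible
        rw [hψt] at hw
        exfalso
        by_cases hmk : m = k
        · subst hmk
          exact hwFj (hw ▸ hgkFj)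
        · apply hwpair
          rw [← hw]
          exact hfact2 k m
    subst hwk
    refine pair_mem hP.1 hGK ?_ (Finset.mem_union_right _ (Finset.mem_singleton_self _))
    apply Finset.mem_union_left
    apply Finset.mem_sdiff.2
    refine ⟨Finset.mem_union_right _ (Finset.mem_singleton_self _), ?_⟩
    simpa using (hgf_ne k j).symm
  have hψ_pair : ∀ x y : Fin d × Bool, x.1 ≠ y.1 → ({ψ x, ψ y} : Finset V) ∈ K := by
    rintro ⟨j, bj⟩ ⟨k, bk⟩ h
    simp only at h
    cases bj <;> cases bk <;> simp only [hψt, hψf]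
    · exact hfact4 j k h
    · rw [Finset.pair_comm]; exact hfact3 k j (Ne.symm h)
    · exact hfact3 j k h
    · exact hfact2 j k
  have hchar : ∀ s : Finset V, s ∈ K ↔
      ((∀ x ∈ s, x ∈ Vfin K hfin) ∧ ∀ j : Fin d, ¬(g j ∈ s ∧ f j ∈ s)) := by
    intro s
    constructor
    · intro hs
      refine ⟨fun x hx => (mem_Vfin hP.1 hfin).2 (vert_mem hP.1 hs hx), ?_⟩
      rintro j ⟨h1, h2⟩
      exact (hf j).2.1 (pair_mem hP.1 hs h1 h2)
    · rintro ⟨hsub, hanti⟩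
      apply hcl
      · intro u hu
        exact (mem_Vfin hP.1 hfin).1 (hsub u hu)
      · intro u hu w hw huw
        obtain ⟨x, rfl⟩ := hrep u (hsub u hu)
        obtain ⟨y, rfl⟩ := hrep w (hsub w hw)
        by_cases hxy : x.1 = y.1
        · exfalso
          obtain ⟨j, bx⟩ := x
          obtain ⟨k, by'⟩ := y
          obtain rfl : j = k := hxy
          cases bx <;> cases by'
          · exact huw rfl
          · exact hanti j ⟨hw, hu⟩
          · exact hanti j ⟨hu, hw⟩
          · exact huw rfl
        · exact hψ_pair x y hxy
  have hne : Nonempty (Fin d × Bool) := ⟨(⟨0, hdpos⟩, true)⟩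
  set φ : V → Fin d × Bool := Function.invFun ψ with hφ
  have hli : ∀ x, φ (ψ x) = x := Function.leftInverse_invFun hψ_inj
  refine ⟨φ, ?_, ?_⟩
  · intro u hu w hw h
    obtain ⟨x, rfl⟩ := hrep u ((mem_Vfin hP.1 hfin).2 hu)
    obtain ⟨y, rfl⟩ := hrep w ((mem_Vfin hP.1 hfin).2 hw)
    rw [hli, hli] at h
    rw [h]
  · ext t
    simp only [Set.mem_image]
    constructor
    · rintro ⟨s, hsK, rfl⟩
      intro j hj
      obtain ⟨h1, h2⟩ := hj
      obtain ⟨u, hu, hu2⟩ := Finset.mem_image.1 h1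
      obtain ⟨w, hw, hw2⟩ := Finset.mem_image.1 h2
      obtain ⟨x, rfl⟩ := hrep u (((hchar s).1 hsK).1 u hu)
      obtain ⟨y, rfl⟩ := hrep w (((hchar s).1 hsK).1 w hw)
      rw [hli] at hu2 hw2
      subst hu2; subst hw2
      exact ((hchar s).1 hsK).2 j ⟨hu, hw⟩
    · intro ht
      refine ⟨t.image ψ, ?_, ?_⟩
      · rw [hchar]
        refine ⟨?_, ?_⟩
        · intro x hx
          obtain ⟨y, -, rfl⟩ := Finset.mem_image.1 hx
          exact hψ_vert y
        · rintro j ⟨h1, h2⟩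
          apply ht j
          constructor
          · obtain ⟨x, hx, hx2⟩ := Finset.mem_image.1 h1
            rwa [show x = (j, true) from hψ_inj (hx2.trans (hψt j).symm)] at hx
          · obtain ⟨x, hx, hx2⟩ := Finset.mem_image.1 h2
            rwa [show x = (j, false) from hψ_inj (hx2.trans (hψf j).symm)] at hx
      · show (t.image ψ).image φ = t
        rw [Finset.image_image]
        have : t.image (φ ∘ ψ) = t.image id :=
          Finset.image_congr (fun x _ => hli x)
        rw [this, Finset.image_id]

end Flag8

/-- a flag `(d-1)`-pseudomanifold satisfies `f_{i-1} ≥ 2^i C(d,i)` for all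
`0 ≤ i ≤ d`, with equality for some `1 ≤ i ≤ d` iff it is the octahedral sphere. -/
theorem flag_pseudomanifold_lower_bound [DecidableEq V] (K : Set (Finset V)) (d : ℕ)
    (hfin : K.Finite) (hP : IsPseudomanifold K d) (hF : IsFlag K) :
    (∀ i ≤ d, 2 ^ i * d.choose i ≤ fnum K i) ∧
    ((∃ i, 1 ≤ i ∧ i ≤ d ∧ fnum K i = 2 ^ i * d.choose i) ↔ IsOctahedral K d) := by

  have hcl := Flag8.flag_clp hP.1 hF
  constructor
  · exact fun i hi => Flag8.main_lb i K d hfin hP hcl hi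
  · constructor
    · rintro ⟨i, hi1, hid, heq⟩
      exact Flag8.octa_of_verts hP hcl hfin (Flag8.eq_imp_verts hP hcl hfin hi1 hid heq)
    · intro hoct
      refine ⟨1, le_refl 1, Flag8.d_pos hP, ?_⟩
      rw [Flag8.octa_fnum hP hfin hoct, pow_one, Nat.choose_one_right]
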